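/- Let g : ℝ → ℝ be continuously differentiable and set H̄_{ik}(x) = g(|x|²) H_{ik}(x). Then for every x ∈ ℝⁿ: Σ_{i,k,l=1}^n (∂_l H̄_{ik}(x))² = g(|x|²)² Σ_{i,k,l=1}^n (∂_l H_{ik}(x))² + ( 8 g(|x|²) g′(|x|²) + 4 |x|² g′(|x|²)² ) Σ_{i,k=1}^n H_{ik}(x)². -/

import Mathlib

open scoped BigOperators

/-- The quadratic tensor field `H_{ik}(x) = ∑_{p,q} W_{ipkq} x_p x_q`. -/
noncomputable def Hten (n : ℕ) (W : Fin n → Fin n → Fin n → Fin n → ℝ)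
    (i k : Fin n) (x : EuclideanSpace ℝ (Fin n)) : ℝ :=
  ∑ p, ∑ q, W i p k q * x p * x q

/-- Partial derivative in the `l`-th coordinate direction. -/
noncomputable def pder (n : ℕ) (l : Fin n) (f : EuclideanSpace ℝ (Fin n) → ℝ)
    (x : EuclideanSpace ℝ (Fin n)) : ℝ :=
  fderiv ℝ f x (EuclideanSpace.single l 1)

lemma hasFDerivAt_Hten (n : ℕ) (W : Fin n → Fin n → Fin n → Fin n → ℝ) (i k : Fin n)
    (x : EuclideanSpace ℝ (Fin n)) :
    HasFDerivAt (Hten n W i k)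
      (∑ p, ∑ q, W i p k q •
        ((x p • (EuclideanSpace.proj q : EuclideanSpace ℝ (Fin n) →L[ℝ] ℝ))
          + (x q • (EuclideanSpace.proj p : EuclideanSpace ℝ (Fin n) →L[ℝ] ℝ)))) x := by
  have : HasFDerivAt (fun y : EuclideanSpace ℝ (Fin n) => ∑ p, ∑ q, W i p k q * (y p * y q))
      (∑ p, ∑ q, W i p k q •
        ((x p • (EuclideanSpace.proj q : EuclideanSpace ℝ (Fin n) →L[ℝ] ℝ))
          + (x q • (EuclideanSpace.proj p : EuclideanSpace ℝ (Fin n) →L[ℝ] ℝ)))) x := by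
    apply HasFDerivAt.fun_sum
    intro p _
    apply HasFDerivAt.fun_sum
    intro q _
    exact HasFDerivAt.const_mul (𝕜 := ℝ)
      ((EuclideanSpace.proj p).hasFDerivAt.mul (EuclideanSpace.proj q).hasFDerivAt)
      (W i p k q)
  have hfun : Hten n W i k
      = fun y : EuclideanSpace ℝ (Fin n) => ∑ p, ∑ q, W i p k q * (y p * y q) := by
    funext y
    simp [Hten, mul_assoc]
  rw [hfun]
  exact this

lemma pder_Hten (n : ℕ) (W : Fin n → Fin n → Fin n → Fin n → ℝ) (i k l : Fin n)
    (x : EuclideanSpace ℝ (Fin n)) :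
    pder n l (Hten n W i k) x = (∑ q, W i l k q * x q) + (∑ p, W i p k l * x p) := by
  rw [pder, (hasFDerivAt_Hten n W i k x).fderiv]
  simp only [ContinuousLinearMap.coe_sum', Finset.sum_apply, ContinuousLinearMap.coe_smul',
    Pi.smul_apply, ContinuousLinearMap.add_apply, PiLp.proj_apply,
    EuclideanSpace.single_apply, smul_eq_mul]
  have hterm : ∀ p q : Fin n,
      W i p k q * (x p * (if q = l then (1:ℝ) else 0) + x q * (if p = l then (1:ℝ) else 0))
        = (if q = l then W i p k q * x p else 0) + (if p = l then W i p k q * x q else 0) := by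
    intro p q
    by_cases hq : q = l <;> by_cases hp : p = l <;> simp [hq, hp] <;> ring
  calc ∑ p, ∑ q, W i p k q *
        (x p * (if q = l then (1:ℝ) else 0) + x q * (if p = l then (1:ℝ) else 0))
      = ∑ p, ∑ q, ((if q = l then W i p k q * x p else 0)
          + (if p = l then W i p k q * x q else 0)) := by
        exact Finset.sum_congr rfl fun p _ => Finset.sum_congr rfl fun q _ => hterm p q
    _ = (∑ p, ∑ q, (if q = l then W i p k q * x p else 0))
          + (∑ p, ∑ q, (if p = l then W i p k q * x q else 0)) := by
        rw [← Finset.sum_add_distrib]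
        exact Finset.sum_congr rfl fun p _ => Finset.sum_add_distrib
    _ = (∑ p, W i p k l * x p) + (∑ q, W i l k q * x q) := by
        congr 1
        · exact Finset.sum_congr rfl fun p _ => by simp
        · rw [Finset.sum_comm]
          exact Finset.sum_congr rfl fun q _ => by simp
    _ = (∑ q, W i l k q * x q) + (∑ p, W i p k l * x p) := add_comm _ _


lemma euler_Hten (n : ℕ) (W : Fin n → Fin n → Fin n → Fin n → ℝ) (i k : Fin n)
    (x : EuclideanSpace ℝ (Fin n)) :
    ∑ l, x l * pder n l (Hten n W i k) x = 2 * Hten n W i k x := by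
  simp only [pder_Hten, mul_add]
  rw [Finset.sum_add_distrib]
  have h1 : ∑ l, x l * ∑ q, W i l k q * x q = Hten n W i k x := by
    unfold Hten
    refine Finset.sum_congr rfl fun l _ => ?_
    rw [Finset.mul_sum]
    exact Finset.sum_congr rfl fun q _ => by ring
  have h2 : ∑ l, x l * ∑ p, W i p k l * x p = Hten n W i k x := by
    unfold Hten
    rw [Finset.sum_comm]
    refine Finset.sum_congr rfl fun p _ => ?_
    rw [Finset.mul_sum]
    exact Finset.sum_congr rfl fun l _ => by ring
  rw [h1, h2]; ring

lemma normsq_eq (n : ℕ) (x : EuclideanSpace ℝ (Fin n)) : ‖x‖ ^ 2 = ∑ l, x l ^ 2 := by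
  rw [EuclideanSpace.norm_eq, Real.sq_sqrt (by positivity)]
  simp [Real.norm_eq_abs, sq_abs]

lemma pder_bar (n : ℕ) (W : Fin n → Fin n → Fin n → Fin n → ℝ) (i k l : Fin n)
    (g : ℝ → ℝ) (hg : ContDiff ℝ 1 g) (x : EuclideanSpace ℝ (Fin n)) :
    pder n l (fun y => g (‖y‖ ^ 2) * Hten n W i k y) x
      = g (‖x‖ ^ 2) * pder n l (Hten n W i k) x
        + 2 * deriv g (‖x‖ ^ 2) * x l * Hten n W i k x := by
  have hnorm : HasFDerivAt (fun y : EuclideanSpace ℝ (Fin n) => ‖y‖ ^ 2)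
      (2 • (innerSL ℝ x)) x := (hasStrictFDerivAt_norm_sq x).hasFDerivAt
  have hgd : HasDerivAt g (deriv g (‖x‖ ^ 2)) (‖x‖ ^ 2) :=
    ((hg.differentiable one_ne_zero) (‖x‖ ^ 2)).hasDerivAt
  have hG : HasFDerivAt (fun y : EuclideanSpace ℝ (Fin n) => g (‖y‖ ^ 2))
      (deriv g (‖x‖ ^ 2) • (2 • (innerSL ℝ x))) x := hgd.comp_hasFDerivAt x hnorm
  have hH := hasFDerivAt_Hten n W i k x
  have hprod : HasFDerivAt (fun y => g (‖y‖ ^ 2) * Hten n W i k y) _ x := hG.mul hH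
  rw [pder, hprod.fderiv]
  have hHd : (fderiv ℝ (Hten n W i k) x) = _ := hH.fderiv
  simp only [ContinuousLinearMap.add_apply, ContinuousLinearMap.smul_apply, smul_eq_mul,
    innerSL_apply_apply]
  rw [pder, hHd]
  have hinner : (inner ℝ x (EuclideanSpace.single l (1:ℝ)) : ℝ) = x l := by
    rw [real_inner_comm]
    simp [EuclideanSpace.inner_single_left]
  rw [hinner]
  ring

theorem stmt_7 (n : ℕ) (hn : 3 ≤ n) (W : Fin n → Fin n → Fin n → Fin n → ℝ)
    (hsymm1 : ∀ i j k l, W i j k l = - W j i k l)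
    (hsymm2 : ∀ i j k l, W i j k l = - W i j l k)
    (hsymm3 : ∀ i j k l, W i j k l = W k l i j)
    (hBianchi : ∀ i j k l, W i j k l + W i k l j + W i l j k = 0)
    (htrace : ∀ j l, ∑ i, W i j i l = 0)
    (g : ℝ → ℝ) (hg : ContDiff ℝ 1 g)
    (x : EuclideanSpace ℝ (Fin n)) :
    ∑ i, ∑ k, ∑ l, (pder n l (fun y => g (‖y‖ ^ 2) * Hten n W i k y) x) ^ 2
      = g (‖x‖ ^ 2) ^ 2 * (∑ i, ∑ k, ∑ l, (pder n l (Hten n W i k) x) ^ 2)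
        + (8 * g (‖x‖ ^ 2) * deriv g (‖x‖ ^ 2)
            + 4 * ‖x‖ ^ 2 * (deriv g (‖x‖ ^ 2)) ^ 2) *
          (∑ i, ∑ k, (Hten n W i k x) ^ 2) := by
  have key : ∀ i k : Fin n,
      ∑ l, (pder n l (fun y => g (‖y‖ ^ 2) * Hten n W i k y) x) ^ 2
        = g (‖x‖ ^ 2) ^ 2 * (∑ l, (pder n l (Hten n W i k) x) ^ 2)
          + (8 * g (‖x‖ ^ 2) * deriv g (‖x‖ ^ 2)
              + 4 * ‖x‖ ^ 2 * (deriv g (‖x‖ ^ 2)) ^ 2) * (Hten n W i k x) ^ 2 := by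
    intro i k
    have heuler := euler_Hten n W i k x
    have hns := normsq_eq n x
    set G := g (‖x‖ ^ 2)
    set G' := deriv g (‖x‖ ^ 2)
    set H := Hten n W i k x
    calc ∑ l, (pder n l (fun y => g (‖y‖ ^ 2) * Hten n W i k y) x) ^ 2
        = ∑ l, (G ^ 2 * (pder n l (Hten n W i k) x) ^ 2
            + 4 * G * G' * H * (x l * pder n l (Hten n W i k) x)
            + 4 * G' ^ 2 * H ^ 2 * (x l ^ 2)) := by
          refine Finset.sum_congr rfl fun l _ => ?_
          rw [pder_bar n W i k l g hg x]
          ring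
      _ = G ^ 2 * (∑ l, (pder n l (Hten n W i k) x) ^ 2)
            + 4 * G * G' * H * (∑ l, x l * pder n l (Hten n W i k) x)
            + 4 * G' ^ 2 * H ^ 2 * (∑ l, x l ^ 2) := by
          rw [Finset.sum_add_distrib, Finset.sum_add_distrib, ← Finset.mul_sum,
            ← Finset.mul_sum, ← Finset.mul_sum]
      _ = G ^ 2 * (∑ l, (pder n l (Hten n W i k) x) ^ 2)
            + (8 * G * G' + 4 * ‖x‖ ^ 2 * G' ^ 2) * H ^ 2 := by
          rw [heuler, ← hns]; ring
  calc ∑ i, ∑ k, ∑ l, (pder n l (fun y => g (‖y‖ ^ 2) * Hten n W i k y) x) ^ 2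
      = ∑ i, ∑ k, (g (‖x‖ ^ 2) ^ 2 * (∑ l, (pder n l (Hten n W i k) x) ^ 2)
          + (8 * g (‖x‖ ^ 2) * deriv g (‖x‖ ^ 2)
              + 4 * ‖x‖ ^ 2 * (deriv g (‖x‖ ^ 2)) ^ 2) * (Hten n W i k x) ^ 2) :=
        Finset.sum_congr rfl fun i _ => Finset.sum_congr rfl fun k _ => key i k
    _ = _ := by
        simp only [Finset.sum_add_distrib, ← Finset.mul_sum]
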